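/- The three-tangle τ(ψ) = |Σ ψ_{i₁j₁k₁}ψ_{i₂j₂k₂}ψ_{i₃j₃k₃}ψ_{i₄j₄k₄} ε_{i₁i₂}ε_{i₃i₄}ε_{j₁j₂}ε_{j₃j₄}ε_{k₁k₃}ε_{k₂k₄}| of a three-qubit state ψ ∈ (ℂ²)^{⊗3} is invariant under ψ ↦ (A⊗B⊗C)ψ for all A,B,C ∈ SL(2,ℂ). -/

import Mathlib

open Matrix

/-- The two-index Levi-Civita symbol. -/
def eps2 : Fin 2 → Fin 2 → ℂ :=
  fun i j => if i = 0 ∧ j = 1 then 1 else if i = 1 ∧ j = 0 then -1 else 0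

/-- Action of `A ⊗ B ⊗ C` on a three-qubit state given by its coefficients. -/
noncomputable def act3 (A B C : Matrix (Fin 2) (Fin 2) ℂ)
    (ψ : Fin 2 × Fin 2 × Fin 2 → ℂ) : Fin 2 × Fin 2 × Fin 2 → ℂ :=
  fun x => ∑ i, ∑ j, ∑ k, A x.1 i * B x.2.1 j * C x.2.2 k * ψ (i, j, k)

/-- The three-tangle `τ(ψ)`. -/
noncomputable def tangle3 (ψ : Fin 2 × Fin 2 × Fin 2 → ℂ) : ℝ :=
  ‖(∑ i₁, ∑ i₂, ∑ i₃, ∑ i₄, ∑ j₁, ∑ j₂, ∑ j₃, ∑ j₄, ∑ k₁, ∑ k₂, ∑ k₃, ∑ k₄,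
    ψ (i₁, j₁, k₁) * ψ (i₂, j₂, k₂) * ψ (i₃, j₃, k₃) * ψ (i₄, j₄, k₄) *
      eps2 i₁ i₂ * eps2 i₃ i₄ * eps2 j₁ j₂ * eps2 j₃ j₄ * eps2 k₁ k₃ * eps2 k₂ k₄)‖

/-- Auxiliary bilinear quantity: the two first slots of `ψ ⊗ ψ` contracted with
Levi-Civita symbols, leaving the third-slot indices free. -/
noncomputable def Qb (ψ : Fin 2 × Fin 2 × Fin 2 → ℂ) (k k' : Fin 2) : ℂ :=
  ∑ i, ∑ i', ∑ j, ∑ j', ψ (i, j, k) * ψ (i', j', k') * eps2 i i' * eps2 j j'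

lemma eps00 : eps2 0 0 = 0 := rfl
lemma eps01 : eps2 0 1 = 1 := rfl
lemma eps10 : eps2 1 0 = -1 := rfl
lemma eps11 : eps2 1 1 = 0 := rfl

set_option maxHeartbeats 4000000 in
/-- The 12-fold tangle sum factors through `Qb`. -/
lemma tangle_sum_eq_Qb (ψ : Fin 2 × Fin 2 × Fin 2 → ℂ) :
    (∑ i₁, ∑ i₂, ∑ i₃, ∑ i₄, ∑ j₁, ∑ j₂, ∑ j₃, ∑ j₄, ∑ k₁, ∑ k₂, ∑ k₃, ∑ k₄,
      ψ (i₁, j₁, k₁) * ψ (i₂, j₂, k₂) * ψ (i₃, j₃, k₃) * ψ (i₄, j₄, k₄) *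
        eps2 i₁ i₂ * eps2 i₃ i₄ * eps2 j₁ j₂ * eps2 j₃ j₄ * eps2 k₁ k₃ * eps2 k₂ k₄) =
    ∑ k₁, ∑ k₂, ∑ k₃, ∑ k₄, Qb ψ k₁ k₂ * Qb ψ k₃ k₄ * eps2 k₁ k₃ * eps2 k₂ k₄ := by
  simp (config := { maxSteps := 10000000 }) only [Qb, Fin.sum_univ_two, eps00, eps01,
    eps10, eps11]
  ring

set_option maxHeartbeats 2000000 in
/-- Transformation of `Qb` under the local action. -/
lemma Qb_act3 (A B C : Matrix (Fin 2) (Fin 2) ℂ) (ψ : Fin 2 × Fin 2 × Fin 2 → ℂ)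
    (k k' : Fin 2) :
    Qb (act3 A B C ψ) k k' =
      A.det * B.det * ∑ κ, ∑ κ', C k κ * C k' κ' * Qb ψ κ κ' := by
  simp only [Qb, act3, Fin.sum_univ_two, eps00, eps01, eps10, eps11, Matrix.det_fin_two]
  ring

set_option maxHeartbeats 2000000 in
/-- Contracting the third-slot transformation produces `det C ^ 2`. -/
lemma Qb_contract (C : Matrix (Fin 2) (Fin 2) ℂ) (Qf : Fin 2 → Fin 2 → ℂ) :
    (∑ k₁, ∑ k₂, ∑ k₃, ∑ k₄,
        (∑ κ, ∑ κ', C k₁ κ * C k₂ κ' * Qf κ κ') * (∑ κ, ∑ κ', C k₃ κ * C k₄ κ' * Qf κ κ') *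
          eps2 k₁ k₃ * eps2 k₂ k₄) =
      C.det ^ 2 * ∑ k₁, ∑ k₂, ∑ k₃, ∑ k₄, Qf k₁ k₂ * Qf k₃ k₄ * eps2 k₁ k₃ * eps2 k₂ k₄ := by
  simp only [Fin.sum_univ_two, eps00, eps01, eps10, eps11, Matrix.det_fin_two]
  ring

/-- the three-tangle is invariant under `ψ ↦ (A⊗B⊗C)ψ` with
`A, B, C ∈ SL(2,ℂ)`. -/
theorem tangle3_SL_invariant (ψ : Fin 2 × Fin 2 × Fin 2 → ℂ)
    (A B C : Matrix (Fin 2) (Fin 2) ℂ)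
    (hA : A.det = 1) (hB : B.det = 1) (hC : C.det = 1) :
    tangle3 (act3 A B C ψ) = tangle3 ψ := by
  unfold tangle3
  rw [tangle_sum_eq_Qb, tangle_sum_eq_Qb ψ]
  simp only [Qb_act3, hA, hB, one_mul]
  rw [Qb_contract, hC, one_pow, one_mul]
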